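/- Let G=(V0,V1,E) be a connectivity game and Γ(G)=(N,Son) its derivation forest. For every node X∈N with |X|>1, the connectivity sub-game G(X) played on the vertex set X (with edges E∩(X×X), where player 0's objective is to visit every vertex of X infinitely often) is forced-connected. -/

import Mathlib

namespace Games

universe u

variable {V : Type u}

/-- A connectivity game: player 0's positions `V0`, player 1's positions `V1`,
and the edge set `E`. -/
structure ConnGame (V : Type u) where
  V0 : Set V
  V1 : Set V
  E : Set (V × V)

namespace ConnGame

/-- The vertex set `V = V0 ∪ V1`. -/
def verts (G : ConnGame V) : Set V := G.V0 ∪ G.V1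

/-- The sub-game of `G` played on the vertex set `X` (edges restricted to `X`). -/
def restrict (G : ConnGame V) (X : Set V) : ConnGame V :=
  ⟨G.V0 ∩ X, G.V1 ∩ X, {e | e ∈ G.E ∧ e.1 ∈ X ∧ e.2 ∈ X}⟩

end ConnGame

/-- Reachability by a directed path in the digraph with edge set `E`. -/
def Reach (E : Set (V × V)) : V → V → Prop :=
  Relation.ReflTransGen fun x y => (x, y) ∈ E

/-- Reachability by a directed path staying inside `X`. -/
def ReachWithin (E : Set (V × V)) (X : Set V) : V → V → Prop :=
  Relation.ReflTransGen fun x y => (x, y) ∈ E ∧ x ∈ X ∧ y ∈ X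

/-- The set of strongly connected components of the digraph with vertex set `W`
and edge set `E`. -/
def SCCs (W : Set V) (E : Set (V × V)) : Set (Set V) :=
  {S | ∃ v ∈ W, S = {u | u ∈ W ∧ Reach E v u ∧ Reach E u v}}

/-- The digraph with vertex set `W` and edge set `E` is strongly connected. -/
def StronglyConnected (W : Set V) (E : Set (V × V)) : Prop :=
  ∀ a ∈ W, ∀ b ∈ W, Reach E a b

/-- `E⁻¹(S)`: the set of predecessors of `S`. -/
def preds (E : Set (V × V)) (S : Set V) : Set V := {u | ∃ s ∈ S, (u, s) ∈ E}

/-- `Force(U, S) = {v ∈ (E⁻¹(S) \ S) ∩ U : E(v) ⊆ S}`. -/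
def Force (E : Set (V × V)) (U S : Set V) : Set V :=
  {v | v ∈ (preds E S \ S) ∩ U ∧ ∀ u, (v, u) ∈ E → u ∈ S}

/-- `X` is a forced trap (FT) w.r.t. player 1's positions `V1` and edge set `E`:
either `X` is a singleton, or `|X| > 1`, `E(X ∩ V1) ⊆ X` and any two vertices of `X`
are strongly connected within `X`. -/
def IsFT (V1 : Set V) (E : Set (V × V)) (X : Set V) : Prop :=
  (∃ v, X = {v}) ∨
    (X.Nontrivial ∧ (∀ v ∈ X ∩ V1, ∀ u, (v, u) ∈ E → u ∈ X) ∧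
      ∀ a ∈ X, ∀ b ∈ X, ReachWithin E X a b)

/-- The derivative sequence of `G`: `deriv G k = (E_k, U_k, F_k)`. -/
def deriv (G : ConnGame V) : ℕ → Set (V × V) × Set V × Set V
  | 0 => ({e | e ∈ G.E ∧ e.1 ∈ G.V0}, G.V1, ∅)
  | k + 1 =>
    let p := deriv G k
    let F : Set V := ⋃ S ∈ SCCs G.verts p.1, Force G.E p.2.1 S
    (p.1 ∪ {e | e ∈ G.E ∧ e.1 ∈ F}, p.2.1 \ F, F)

/-- The edge set `E_k` of the `k`-th derivative `G_k`. -/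
def Ek (G : ConnGame V) (k : ℕ) : Set (V × V) := (deriv G k).1

/-- The set `U_k`. -/
def Uk (G : ConnGame V) (k : ℕ) : Set V := (deriv G k).2.1

/-- The set `F_k`. -/
def Fk (G : ConnGame V) (k : ℕ) : Set V := (deriv G k).2.2

/-- The stabilization point: the minimal `k > 0` with `F_k = ∅`. -/
noncomputable def stab (G : ConnGame V) : ℕ := sInf {k | 0 < k ∧ Fk G k = ∅}

/-- Finite plays (histories) consistent with the player-0 strategy `s`, starting
at `v0`: at a player-0 position the strategy's (legal) move is played, at a
player-1 position any legal move may be played. -/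
inductive Hist (G : ConnGame V) (s : List V → V) (v0 : V) : List V → Prop
  | base : Hist G s v0 [v0]
  | move0 (h : List V) (v : V) (hh : Hist G s v0 (h ++ [v])) (hv : v ∈ G.V0)
      (he : (v, s (h ++ [v])) ∈ G.E) : Hist G s v0 ((h ++ [v]) ++ [s (h ++ [v])])
  | move1 (h : List V) (v u : V) (hh : Hist G s v0 (h ++ [v])) (hv : v ∈ G.V1)
      (he : (v, u) ∈ G.E) : Hist G s v0 ((h ++ [v]) ++ [u])

/-- The prefix `ρ 0, …, ρ n` of an infinite sequence. -/
def prefixUpTo (ρ : ℕ → V) (n : ℕ) : List V := List.ofFn fun i : Fin (n + 1) => ρ i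

/-- `ρ` is an infinite play consistent with strategy `s` from `v0`. -/
def InfPlay (G : ConnGame V) (s : List V → V) (v0 : V) (ρ : ℕ → V) : Prop :=
  ∀ n, Hist G s v0 (prefixUpTo ρ n)

/-- The set of vertices visited infinitely often by `ρ`. -/
def InfSet (ρ : ℕ → V) : Set V := {v | ∀ N, ∃ n, N ≤ n ∧ ρ n = v}

/-- `s` is a winning strategy for player 0 from `v0` in the connectivity game on `G`:
along every consistent history player 0's moves are legal and the play is never stuck
(so all maximal consistent plays are infinite), and every infinite consistent play
visits every vertex of `G` infinitely often. -/
def WinsConnFrom (G : ConnGame V) (s : List V → V) (v0 : V) : Prop :=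
  (∀ h v, Hist G s v0 (h ++ [v]) →
      (v ∈ G.V0 → (v, s (h ++ [v])) ∈ G.E) ∧ (v ∈ G.V1 → ∃ u, (v, u) ∈ G.E)) ∧
    ∀ ρ : ℕ → V, InfPlay G s v0 ρ → InfSet ρ = G.verts

/-- `G` is forced-connected: player 0 wins the connectivity game from every vertex. -/
def ForcedConnected (G : ConnGame V) : Prop :=
  ∀ v ∈ G.verts, ∃ s : List V → V, WinsConnFrom G s v

/-- The simplified derivative sequence `G'_k`, where the choice function `c`
selects one outgoing edge per forced vertex: `deriv' G c k = (E'_k, U_k, F_k)`. -/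
def deriv' (G : ConnGame V) (c : V → V) : ℕ → Set (V × V) × Set V × Set V
  | 0 => ({e | e ∈ G.E ∧ e.1 ∈ G.V0}, G.V1, ∅)
  | k + 1 =>
    let p := deriv' G c k
    let F : Set V := ⋃ S ∈ SCCs G.verts p.1, Force G.E p.2.1 S
    (p.1 ∪ {e | ∃ f ∈ F, e = (f, c f)}, p.2.1 \ F, F)

/-- The edge set `E'_k` of the simplified derivative `G'_k`. -/
def Ek' (G : ConnGame V) (c : V → V) (k : ℕ) : Set (V × V) := (deriv' G c k).1

/-- The set `F_k` of the simplified derivative sequence. -/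
def Fk' (G : ConnGame V) (c : V → V) (k : ℕ) : Set V := (deriv' G c k).2.2

/-- The stabilization point of the simplified derivative sequence. -/
noncomputable def stab' (G : ConnGame V) (c : V → V) : ℕ :=
  sInf {k | 0 < k ∧ Fk' G c k = ∅}

/-- The reduced derivative sequence `G''_k` on the vertex set `V0`:
`deriv'' G c k = (E''_k, U''_k, F''_k)`. -/
def deriv'' (G : ConnGame V) (c : V → V) : ℕ → Set (V × V) × Set V × Set V
  | 0 => (∅, G.V1, ∅)
  | k + 1 =>
    let p := deriv'' G c k
    let F : Set V := ⋃ S ∈ SCCs G.V0 p.1, Force G.E p.2.1 S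
    (p.1 ∪ {e | ∃ f ∈ F, (e.1, f) ∈ G.E ∧ e.2 = c f}, p.2.1 \ F, F)

/-- The edge set `E''_k` of the reduced derivative `G''_k`. -/
def Ek'' (G : ConnGame V) (c : V → V) (k : ℕ) : Set (V × V) := (deriv'' G c k).1

/-- The set `F''_k` of the reduced derivative sequence. -/
def Fk'' (G : ConnGame V) (c : V → V) (k : ℕ) : Set V := (deriv'' G c k).2.2

/-- The stabilization point of the reduced derivative sequence. -/
noncomputable def stab'' (G : ConnGame V) (c : V → V) : ℕ :=
  sInf {k | 0 < k ∧ Fk'' G c k = ∅}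

/-- The derivation forest: `forest G k = (N_k, Son_k)`. -/
def forest (G : ConnGame V) : ℕ → Set (Set V) × Set (Set V × Set V)
  | 0 => ({S | ∃ v ∈ G.verts, S = {v}}, ∅)
  | k + 1 =>
    let p := forest G k
    let C : Set (Set V) := SCCs G.verts (Ek G (k + 1)) \ p.1
    (p.1 ∪ C, p.2 ∪ {q | q.1 ∈ C ∧ q.2 ∈ SCCs G.verts (Ek G k) ∧ q.2 ⊂ q.1})

/-- The node set `N` of the derivation forest `Γ(G) = Γ_s(G)`. -/
noncomputable def forestN (G : ConnGame V) : Set (Set V) := (forest G (stab G)).1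

/-- The son relation `Son` of the derivation forest `Γ(G) = Γ_s(G)`. -/
noncomputable def forestSon (G : ConnGame V) : Set (Set V × Set V) :=
  (forest G (stab G)).2
/-- Attractor with fuel: from `v`, player 0 can force reaching `T` within `n` steps. -/
inductive Forces (H : ConnGame V) : ℕ → V → Set V → Prop
  | base (n : ℕ) (v : V) (T : Set V) : v ∈ T → Forces H n v T
  | p0 (n : ℕ) (v u : V) (T : Set V) : v ∈ H.V0 → (v, u) ∈ H.E → Forces H n u T →
      Forces H (n + 1) v T
  | p1 (n : ℕ) (v : V) (T : Set V) : v ∈ H.V1 → (∃ u, (v, u) ∈ H.E) →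
      (∀ u, (v, u) ∈ H.E → Forces H n u T) → Forces H (n + 1) v T

lemma Forces.succ {H : ConnGame V} {n : ℕ} {v : V} {T : Set V} (h : Forces H n v T) :
    Forces H (n + 1) v T := by
  induction h with
  | base n v T h => exact .base _ _ _ h
  | p0 n v u T h1 h2 _ ih => exact .p0 _ _ _ _ h1 h2 ih
  | p1 n v T h1 h2 _ ih => exact .p1 _ _ _ h1 h2 ih

lemma Forces.mono {H : ConnGame V} {n n' : ℕ} {v : V} {T : Set V} (h : Forces H n v T)
    (hle : n ≤ n') : Forces H n' v T := by
  induction hle with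
  | refl => exact h
  | step _ ih => exact ih.succ

lemma Forces.trans {H : ConnGame V} {n n' : ℕ} {v : V} {T T' : Set V} (h : Forces H n v T)
    (h' : ∀ t ∈ T, Forces H n' t T') : Forces H (n + n') v T' := by
  induction h with
  | base n v T hm => exact (h' v hm).mono (Nat.le_add_left _ _)
  | p0 n v u T h1 h2 _ ih =>
      have := Forces.p0 _ _ _ _ h1 h2 (ih h')
      rwa [Nat.add_right_comm] at this
  | p1 n v T h1 h2 _ ih =>
      have := Forces.p1 _ _ _ h1 h2 (fun u hu => ih u hu h')
      rwa [Nat.add_right_comm] at this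

lemma forces_zero {H : ConnGame V} {v t : V} (h : Forces H 0 v {t}) : v = t := by
  cases h with
  | base _ _ _ h => exact h

lemma hist_inv {G : ConnGame V} {s : List V → V} {v0 : V} {L : List V} (h : Hist G s v0 L) :
    L = [v0] ∨ ∃ h' w u, L = (h' ++ [w]) ++ [u] ∧ Hist G s v0 (h' ++ [w]) ∧
      (w, u) ∈ G.E ∧ ((w ∈ G.V0 ∧ u = s (h' ++ [w])) ∨ w ∈ G.V1) := by
  cases h with
  | base => exact .inl rfl
  | move0 h v hh hv he => exact .inr ⟨h, v, _, rfl, hh, he, .inl ⟨hv, rfl⟩⟩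
  | move1 h v u hh hv he => exact .inr ⟨h, v, u, rfl, hh, he, .inr hv⟩

lemma hist_mem {G : ConnGame V} {s : List V → V} {v0 : V} {L : List V} (h : Hist G s v0 L) :
    ∀ w ∈ L, w = v0 ∨ ∃ x, (x, w) ∈ G.E := by
  induction h with
  | base => intro w hw; simp at hw; exact .inl hw
  | move0 h v hh hv he ih =>
      intro w hw
      rw [List.mem_append] at hw
      rcases hw with hw | hw
      · exact ih w hw
      · simp at hw; subst hw; exact .inr ⟨v, he⟩
  | move1 h v u hh hv he ih =>
      intro w hw
      rw [List.mem_append] at hw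
      rcases hw with hw | hw
      · exact ih w hw
      · simp at hw; subst hw; exact .inr ⟨v, he⟩

lemma prefixUpTo_zero (ρ : ℕ → V) : prefixUpTo ρ 0 = [ρ 0] := by
  simp [prefixUpTo]

lemma prefixUpTo_succ (ρ : ℕ → V) (n : ℕ) :
    prefixUpTo ρ (n + 1) = prefixUpTo ρ n ++ [ρ (n + 1)] := by
  rw [prefixUpTo, List.ofFn_succ', List.concat_eq_append]
  rfl

lemma prefixUpTo_length (ρ : ℕ → V) (n : ℕ) : (prefixUpTo ρ n).length = n + 1 := by
  simp [prefixUpTo]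

lemma prefixUpTo_getLastD (ρ : ℕ → V) (n : ℕ) (c : V) :
    (prefixUpTo ρ n).getLastD c = ρ n := by
  cases n with
  | zero => simp [prefixUpTo_zero]
  | succ n => rw [prefixUpTo_succ]; exact List.getLastD_concat

lemma reach_mono {E1 E2 : Set (V × V)} (h : E1 ⊆ E2) {a b : V} (hr : Reach E1 a b) :
    Reach E2 a b :=
  Relation.ReflTransGen.mono (fun _ _ hxy => h hxy) _ _ hr

lemma scc_subset {W : Set V} {E' : Set (V × V)} {S : Set V} (hS : S ∈ SCCs W E') : S ⊆ W := by
  obtain ⟨c, hc, rfl⟩ := hS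
  exact fun u hu => hu.1

lemma scc_nested {W : Set V} {E1 E2 : Set (V × V)} (hE : E1 ⊆ E2) {S T : Set V}
    (hS : S ∈ SCCs W E1) (hT : T ∈ SCCs W E2) (hST : (S ∩ T).Nonempty) : S ⊆ T := by
  obtain ⟨c1, hc1, rfl⟩ := hS
  obtain ⟨c2, hc2, rfl⟩ := hT
  obtain ⟨w, hw1, hw2⟩ := hST
  intro u hu
  refine ⟨hu.1, ?_, ?_⟩
  · exact (hw2.2.1.trans (reach_mono hE hw1.2.2)).trans (reach_mono hE hu.2.1)
  · exact ((reach_mono hE hu.2.2).trans (reach_mono hE hw1.2.1)).trans hw2.2.2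

lemma scc_reachWithin {W : Set V} {E' : Set (V × V)}
    (hE' : ∀ e ∈ E', e.1 ∈ W ∧ e.2 ∈ W) {S : Set V} (hS : S ∈ SCCs W E') :
    ∀ a ∈ S, ∀ b ∈ S, ReachWithin E' S a b := by
  obtain ⟨c, hc, rfl⟩ := hS
  intro a ha b hb
  have key : ∀ x, Reach E' x b → Reach E' c x →
      ReachWithin E' {u | u ∈ W ∧ Reach E' c u ∧ Reach E' u c} x b := by
    intro x hxb
    induction hxb using Relation.ReflTransGen.head_induction_on with
    | refl => intro _; exact Relation.ReflTransGen.refl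
    | head h' hrest ih =>
        rename_i x' z
        intro hcx
        have hxz : (x', z) ∈ E' := h'
        have hx'W := (hE' _ hxz).1
        have hzW := (hE' _ hxz).2
        have hx'c : Reach E' x' c :=
          (Relation.ReflTransGen.head hxz hrest).trans hb.2.2
        have hcz : Reach E' c z := hcx.tail hxz
        have hzc : Reach E' z c := hrest.trans hb.2.2
        exact Relation.ReflTransGen.head ⟨hxz, ⟨hx'W, hcx, hx'c⟩, ⟨hzW, hcz, hzc⟩⟩ (ih hcz)
  exact key a (ha.2.2.trans hb.2.1) ha.2.1
lemma Ek_zero (G : ConnGame V) : Ek G 0 = {e | e ∈ G.E ∧ e.1 ∈ G.V0} := rfl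

lemma Ek_succ (G : ConnGame V) (k : ℕ) :
    Ek G (k + 1) = Ek G k ∪
      {e | e ∈ G.E ∧ e.1 ∈ ⋃ S ∈ SCCs G.verts (Ek G k), Force G.E (Uk G k) S} := rfl

lemma Uk_succ (G : ConnGame V) (k : ℕ) :
    Uk G (k + 1) = Uk G k \ ⋃ S ∈ SCCs G.verts (Ek G k), Force G.E (Uk G k) S := rfl

lemma Ek_sub_E (G : ConnGame V) : ∀ k, Ek G k ⊆ G.E := by
  intro k
  induction k with
  | zero => exact fun e he => he.1
  | succ k ih =>
      rw [Ek_succ]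
      rintro e (he | he)
      · exact ih he
      · exact he.1

lemma Ek_mono (G : ConnGame V) {j k : ℕ} (h : j ≤ k) : Ek G j ⊆ Ek G k := by
  induction h with
  | refl => exact fun _ h => h
  | step _ ih =>
      refine ih.trans ?_
      rw [Ek_succ]
      exact Set.subset_union_left

lemma Uk_sub_V1 (G : ConnGame V) : ∀ k, Uk G k ⊆ G.V1 := by
  intro k
  induction k with
  | zero => exact fun v hv => hv
  | succ k ih => rw [Uk_succ]; exact Set.diff_subset.trans ih

lemma edge_src (G : ConnGame V) : ∀ k, ∀ x y : V, (x, y) ∈ Ek G k →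
    x ∈ G.V0 ∨ (x ∈ G.V1 ∧ ∃ j < k, ∃ S ∈ SCCs G.verts (Ek G j),
      ∀ u, (x, u) ∈ G.E → u ∈ S) := by
  intro k
  induction k with
  | zero => intro x y h; exact .inl h.2
  | succ k ih =>
      intro x y h
      rw [Ek_succ] at h
      rcases h with h | h
      · rcases ih x y h with h0 | ⟨h1, j, hj, S, hS, hall⟩
        · exact .inl h0
        · exact .inr ⟨h1, j, Nat.lt_succ_of_lt hj, S, hS, hall⟩
      · obtain ⟨S, hS, hF⟩ := Set.mem_iUnion₂.mp h.2
        exact .inr ⟨Uk_sub_V1 G k hF.1.2, k, Nat.lt_succ_self k, S, hS, hF.2⟩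

lemma forest_mem (G : ConnGame V) : ∀ k, ∀ Y ∈ (forest G k).1,
    (∃ v, Y = {v}) ∨ ∃ j, Y ∈ SCCs G.verts (Ek G j) := by
  intro k
  induction k with
  | zero =>
      rintro Y ⟨v, _, rfl⟩
      exact .inl ⟨v, rfl⟩
  | succ k ih =>
      rintro Y (hY | hY)
      · exact ih Y hY
      · exact .inr ⟨k + 1, hY.1⟩

lemma claimA [Fintype V] (G : ConnGame V) (hdisj : Disjoint G.V0 G.V1)
    (hEsub : G.E ⊆ (G.V0 ×ˢ G.V1) ∪ (G.V1 ×ˢ G.V0))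
    (X : Set V) (K : ℕ) (hXK : X ∈ SCCs G.verts (Ek G K)) :
    ∀ m, m ≤ K → ∀ S, S ∈ SCCs G.verts (Ek G m) → S ⊆ X → ∀ b ∈ S, ∀ a ∈ S,
      ∃ n, Forces (G.restrict X) n a {b} := by
  have hEkW : ∀ m, ∀ e ∈ Ek G m, e.1 ∈ G.verts ∧ e.2 ∈ G.verts := by
    intro m e he
    rcases hEsub (Ek_sub_E G m he) with h | h
    · exact ⟨Or.inl h.1, Or.inr h.2⟩
    · exact ⟨Or.inr h.1, Or.inl h.2⟩
  intro m
  induction m using Nat.strong_induction_on with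
  | _ m ihm =>
  intro hmK S hS hSX b hb a ha
  have hrw := scc_reachWithin (hEkW m) hS a ha b hb
  clear ha
  induction hrw using Relation.ReflTransGen.head_induction_on with
  | refl => exact ⟨0, .base _ _ _ rfl⟩
  | head h' hrest ih2 =>
      rename_i a0 c0
      obtain ⟨he, haS, hcS⟩ := h'
      obtain ⟨nc, hnc⟩ := ih2
      have heE : (a0, c0) ∈ G.E := Ek_sub_E G m he
      rcases edge_src G m a0 c0 he with hv0 | ⟨hv1, j, hjm, Sx, hSx, hall⟩
      · exact ⟨nc + 1, .p0 _ _ _ _ ⟨hv0, hSX haS⟩ ⟨heE, hSX haS, hSX hcS⟩ hnc⟩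
      · have hcSx : c0 ∈ Sx := hall _ heE
        have hSxX : Sx ⊆ X :=
          scc_nested (Ek_mono G (by omega : j ≤ K)) hSx hXK ⟨c0, hcSx, hSX hcS⟩
        have hIH := ihm j hjm (by omega) Sx hSx hSxX c0 hcSx
        have hall2 : ∀ u : V, ∃ nn, u ∈ Sx → Forces (G.restrict X) nn u {c0} := by
          intro u
          by_cases hu : u ∈ Sx
          · obtain ⟨nn, h⟩ := hIH u hu
            exact ⟨nn, fun _ => h⟩
          · exact ⟨0, fun h => absurd h hu⟩
        choose f hf using hall2
        refine ⟨(Finset.univ.sup f) + nc + 1,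
          .p1 _ _ _ ⟨hv1, hSX haS⟩ ⟨c0, heE, hSX haS, hSX hcS⟩ ?_⟩
        intro u hu
        have huSx : u ∈ Sx := hall _ hu.1
        have h2 : Forces (G.restrict X) (f u + nc) u {b} :=
          (hf u huSx).trans (fun t ht => by
            rw [Set.mem_singleton_iff] at ht
            subst ht
            exact hnc)
        exact h2.mono (Nat.add_le_add_right (Finset.le_sup (Finset.mem_univ u)) nc)
open scoped Classical in
noncomputable def dfl (H : ConnGame V) (v : V) : V :=
  if h : ∃ u, (v, u) ∈ H.E then h.choose else v

noncomputable def rk (H : ConnGame V) (t v : V) : ℕ := sInf {n | Forces H n v {t}}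

open scoped Classical in
noncomputable def sig (H : ConnGame V) (t v : V) : V :=
  if h : ∃ u, (v, u) ∈ H.E ∧ rk H t u < rk H t v then h.choose else dfl H v

noncomputable def tgt (xs : List V) (c : V) (i : ℕ) : V := xs.getD (i % xs.length) c

open scoped Classical in
noncomputable def adv (xs : List V) (c : V) (i : ℕ) (w : V) : ℕ :=
  if w = tgt xs c i then i + 1 else i

noncomputable def idxL (xs : List V) (c : V) (h : List V) : ℕ := h.foldl (adv xs c) 0

noncomputable def sStar (H : ConnGame V) (xs : List V) (c : V) (h : List V) : V :=
  sig H (tgt xs c (idxL xs c h)) (h.getLastD c)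

lemma sig_edge {H : ConnGame V} {t v : V} (h : ∃ u, (v, u) ∈ H.E) :
    (v, sig H t v) ∈ H.E := by
  rw [sig]
  split
  next h1 => exact h1.choose_spec.1
  next =>
    rw [dfl]
    split
    next h2 => exact h2.choose_spec
    next h2 => exact absurd h h2

lemma rk_forces {H : ConnGame V} {t v : V} (hne : {n | Forces H n v {t}}.Nonempty) :
    Forces H (rk H t v) v {t} := Nat.sInf_mem hne

lemma sig_rank {H : ConnGame V} (hdisj : Disjoint H.V0 H.V1) {t v : V}
    (hv0 : v ∈ H.V0) (hvt : v ≠ t) (hne : {n | Forces H n v {t}}.Nonempty) :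
    rk H t (sig H t v) < rk H t v := by
  have hmem := rk_forces hne
  have hex : ∃ u, (v, u) ∈ H.E ∧ rk H t u < rk H t v := by
    generalize hR : rk H t v = R at hmem ⊢
    cases hmem with
    | base _ _ _ h => exact absurd h hvt
    | p0 n _ u _ h1 h2 h3 => exact ⟨u, h2, Nat.lt_succ_of_le (Nat.sInf_le h3)⟩
    | p1 n _ _ h1 h2 h3 => exact absurd h1 (Set.disjoint_left.mp hdisj hv0)
  rw [sig]
  split
  next h1 => exact h1.choose_spec.2
  next h1 => exact absurd hex h1

lemma rk_lt_of_V1 {H : ConnGame V} (hdisj : Disjoint H.V0 H.V1) {t v u : V}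
    (hv1 : v ∈ H.V1) (hvt : v ≠ t) (hne : {n | Forces H n v {t}}.Nonempty)
    (hedge : (v, u) ∈ H.E) : rk H t u < rk H t v := by
  have hmem := rk_forces hne
  generalize hR : rk H t v = R at hmem ⊢
  cases hmem with
  | base _ _ _ h => exact absurd h hvt
  | p0 n _ u' _ h1 h2 h3 => exact absurd hv1 (Set.disjoint_left.mp hdisj h1)
  | p1 n _ _ h1 h2 h3 => exact Nat.lt_succ_of_le (Nat.sInf_le (h3 u hedge))

lemma rk_eq_zero {H : ConnGame V} {t v : V} (hne : {n | Forces H n v {t}}.Nonempty)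
    (h : rk H t v = 0) : v = t := forces_zero (h ▸ rk_forces hne)
lemma win [Fintype V] (H : ConnGame V)
    (hdisj : Disjoint H.V0 H.V1)
    (hE : ∀ e ∈ H.E, e.1 ∈ H.verts ∧ e.2 ∈ H.verts)
    (hsucc : ∀ v ∈ H.verts, ∃ u, (v, u) ∈ H.E)
    (hforce : ∀ t ∈ H.verts, ∀ a ∈ H.verts, ∃ n, Forces H n a {t})
    (hnt : H.verts.Nontrivial) : ForcedConnected H := by
  classical
  obtain ⟨p, hp, q, hq, hpq⟩ := hnt
  set xs : List V := (Set.toFinite H.verts).toFinset.toList with hxs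
  have hnodup : xs.Nodup := Finset.nodup_toList _
  have hmemxs : ∀ w, w ∈ xs ↔ w ∈ H.verts := by
    intro w; rw [hxs, Finset.mem_toList, Set.Finite.mem_toFinset]
  have hm2 : 2 ≤ xs.length := by
    rw [hxs, Finset.length_toList]
    refine Finset.one_lt_card.mpr ⟨p, ?_, q, ?_, hpq⟩
    · rw [Set.Finite.mem_toFinset]; exact hp
    · rw [Set.Finite.mem_toFinset]; exact hq
  have hm0 : 0 < xs.length := by omega
  set c := p with hc
  have htgt_mem : ∀ i, tgt xs c i ∈ H.verts := by
    intro i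
    have hlt : i % xs.length < xs.length := Nat.mod_lt _ hm0
    rw [tgt, List.getD_eq_getElem xs c hlt]
    exact (hmemxs _).1 (List.getElem_mem hlt)
  have htgt_ne : ∀ i, tgt xs c (i + 1) ≠ tgt xs c i := by
    intro i heq
    have h1 : (i + 1) % xs.length < xs.length := Nat.mod_lt _ hm0
    have h2 : i % xs.length < xs.length := Nat.mod_lt _ hm0
    rw [tgt, tgt, List.getD_eq_getElem xs c h1, List.getD_eq_getElem xs c h2] at heq
    have heq2 : (i + 1) % xs.length = i % xs.length := by
      exact (List.Nodup.getElem_inj_iff hnodup).mp heq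
    have hmod : i % xs.length = (i + 1) % xs.length := heq2.symm
    have hdvd : xs.length ∣ 1 := by
      simpa using (Nat.modEq_iff_dvd' (Nat.le_succ i)).mp hmod
    have := Nat.le_of_dvd one_pos hdvd
    omega
  intro v hv
  refine ⟨sStar H xs c, ?_, ?_⟩
  · intro h w hh
    have hwX : w ∈ H.verts := by
      rcases hist_mem hh w (by simp) with rfl | ⟨x, hx⟩
      · exact hv
      · exact (hE _ hx).2
    refine ⟨fun _ => ?_, fun _ => hsucc w hwX⟩
    have hlast : (h ++ [w]).getLastD c = w := List.getLastD_concat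
    rw [sStar, hlast]
    exact sig_edge (hsucc w hwX)
  · intro ρ hρ
    have hρ0 : ρ 0 = v := by
      rcases hist_inv (hρ 0) with h1 | ⟨h', w, u, heq, _⟩
      · rw [prefixUpTo_zero] at h1; simpa using h1
      · exfalso
        have hl := congrArg List.length heq
        rw [prefixUpTo_length] at hl
        simp at hl
    have hstep : ∀ n, (ρ n, ρ (n + 1)) ∈ H.E ∧
        (ρ n ∈ H.V0 → ρ (n + 1) = sStar H xs c (prefixUpTo ρ n)) := by
      intro n
      rcases hist_inv (hρ (n + 1)) with h1 | ⟨h', w, u, heq, hh, he, hcase⟩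
      · exfalso
        have hl := congrArg List.length h1
        rw [prefixUpTo_length] at hl
        simp at hl
      · rw [prefixUpTo_succ] at heq
        have hlen : (prefixUpTo ρ n).length = (h' ++ [w]).length := by
          have hl := congrArg List.length heq
          simp only [List.length_append, List.length_singleton] at hl
          simp only [List.length_append, List.length_singleton]
          omega
        obtain ⟨hpre, hu⟩ := List.append_inj heq hlen
        have hu' : u = ρ (n + 1) := by simpa using hu.symm
        have hw' : w = ρ n := by
          have hgl := prefixUpTo_getLastD ρ n c
          rw [hpre, List.getLastD_concat] at hgl
          exact hgl
        subst hu'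
        subst hw'
        refine ⟨he, fun h0 => ?_⟩
        rcases hcase with ⟨_, hs⟩ | hw1
        · rw [hpre]; exact hs
        · exact absurd h0 (Set.disjoint_right.mp hdisj hw1)
    have hXall : ∀ n, ρ n ∈ H.verts := by
      intro n
      cases n with
      | zero => rw [hρ0]; exact hv
      | succ n => exact (hE _ (hstep n).1).2
    set I : ℕ → ℕ := fun n => idxL xs c (prefixUpTo ρ n) with hI
    have hI0 : I 0 = adv xs c 0 (ρ 0) := by
      show idxL xs c (prefixUpTo ρ 0) = adv xs c 0 (ρ 0)
      rw [prefixUpTo_zero]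
      simp [idxL]
    have hIsucc : ∀ n, I (n + 1) = adv xs c (I n) (ρ (n + 1)) := by
      intro n
      show idxL xs c (prefixUpTo ρ (n + 1)) = adv xs c (idxL xs c (prefixUpTo ρ n)) (ρ (n + 1))
      rw [prefixUpTo_succ]
      simp [idxL, List.foldl_append]
    have hIstep : ∀ n, (I (n + 1) = I n ∧ ρ (n + 1) ≠ tgt xs c (I n)) ∨
        (I (n + 1) = I n + 1 ∧ ρ (n + 1) = tgt xs c (I n)) := by
      intro n
      rw [hIsucc n, adv]
      split_ifs with h
      · exact .inr ⟨rfl, h⟩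
      · exact .inl ⟨rfl, h⟩
    have hINV : ∀ n, ρ n ≠ tgt xs c (I n) := by
      intro n
      cases n with
      | zero =>
          rw [hI0, adv]
          split_ifs with h
          · rw [h]; exact (htgt_ne 0).symm
          · exact h
      | succ n =>
          rcases hIstep n with ⟨h1, h2⟩ | ⟨h1, h2⟩
          · rw [h1]; exact h2
          · rw [h1, h2]; exact (htgt_ne (I n)).symm
    have hIof : ∀ n, idxL xs c (prefixUpTo ρ n) = I n := fun _ => rfl
    have hDEC : ∀ n, I (n + 1) = I n →
        rk H (tgt xs c (I n)) (ρ (n + 1)) < rk H (tgt xs c (I n)) (ρ n) := by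
      intro n hEq
      have hne_n : ρ n ≠ tgt xs c (I n) := hINV n
      have hfor : {k | Forces H k (ρ n) {tgt xs c (I n)}}.Nonempty :=
        hforce _ (htgt_mem _) _ (hXall n)
      rcases (hXall n : ρ n ∈ H.V0 ∪ H.V1) with hv0 | hv1
      · have h2 := (hstep n).2 hv0
        rw [sStar, prefixUpTo_getLastD, hIof n] at h2
        rw [h2]
        exact sig_rank hdisj hv0 hne_n hfor
      · exact rk_lt_of_V1 hdisj hv1 hne_n hfor (hstep n).1
    have hDESC : ∀ r n, rk H (tgt xs c (I n)) (ρ n) ≤ r → ∃ n', n < n' ∧ I n < I n' := by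
      intro r
      induction r with
      | zero =>
          intro n hr
          have h0 : rk H (tgt xs c (I n)) (ρ n) = 0 := Nat.le_zero.mp hr
          have := rk_eq_zero (hforce _ (htgt_mem _) _ (hXall n)) h0
          exact absurd this (hINV n)
      | succ r ih =>
          intro n hr
          rcases hIstep n with ⟨h1, _⟩ | ⟨h1, _⟩
          · have hlt := hDEC n h1
            have hr' : rk H (tgt xs c (I (n + 1))) (ρ (n + 1)) ≤ r := by
              rw [h1]; omega
            obtain ⟨n', hn1, hn2⟩ := ih (n + 1) hr'
            rw [h1] at hn2
            exact ⟨n', by omega, hn2⟩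
          · exact ⟨n + 1, Nat.lt_succ_self n, by omega⟩
    have hImono : ∀ a b, a ≤ b → I a ≤ I b := by
      intro a b hab
      induction hab with
      | refl => exact le_rfl
      | @step m h ih =>
          have h2 : I a ≤ I (m + 1) := by
            rcases hIstep m with ⟨h1, _⟩ | ⟨h1, _⟩ <;> omega
          exact h2
    have hUNB : ∀ b, ∃ n, b ≤ I n := by
      intro b
      induction b with
      | zero => exact ⟨0, Nat.zero_le _⟩
      | succ b ih =>
          obtain ⟨n, hn⟩ := ih
          obtain ⟨n', _, h2⟩ := hDESC (rk H (tgt xs c (I n)) (ρ n)) n le_rfl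
          exact ⟨n', by omega⟩
    have hCROSS : ∀ N j, I N ≤ j → ∃ n, N ≤ n ∧ ρ (n + 1) = tgt xs c j := by
      intro N j hNj
      obtain ⟨n₁, hn₁⟩ := hUNB (j + 1)
      have hex : ∃ n, j < I n := ⟨n₁, by omega⟩
      have hne0 : Nat.find hex ≠ 0 := by
        intro h0
        have hsp := Nat.find_spec hex
        rw [h0] at hsp
        have := hImono 0 N (Nat.zero_le N)
        omega
      obtain ⟨k, hk⟩ : ∃ k, Nat.find hex = k + 1 := ⟨Nat.find hex - 1, by omega⟩
      have hspec : j < I (k + 1) := hk ▸ Nat.find_spec hex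
      have hmin : ¬ j < I k := Nat.find_min hex (by omega)
      rcases hIstep k with ⟨h1, _⟩ | ⟨h1, h2⟩
      · omega
      · have hIk : I k = j := by omega
        refine ⟨k, ?_, by rw [h2, hIk]⟩
        by_contra hcon
        push_neg at hcon
        have : I (k + 1) ≤ I N := hImono (k + 1) N (by omega)
        omega
    have hsub1 : InfSet ρ ⊆ H.verts := by
      intro w hw
      obtain ⟨n, _, rfl⟩ := hw 0
      exact hXall n
    have hsub2 : H.verts ⊆ InfSet ρ := by
      intro x hx
      simp only [InfSet, Set.mem_setOf_eq]
      intro N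
      obtain ⟨pidx, hplt, hpx⟩ := List.mem_iff_getElem.mp ((hmemxs x).2 hx)
      have hq0j : I N ≤ pidx + (I N / xs.length + 1) * xs.length := by
        have hA := Nat.div_add_mod' (I N) xs.length
        have hB : I N % xs.length < xs.length := Nat.mod_lt _ hm0
        have hAB : (I N / xs.length + 1) * xs.length
            = I N / xs.length * xs.length + xs.length := by ring
        rw [hAB]
        linarith
      have hjmod : (pidx + (I N / xs.length + 1) * xs.length) % xs.length = pidx := by
        rw [Nat.add_mul_mod_self_right, Nat.mod_eq_of_lt hplt]
      obtain ⟨n, hn1, hn2⟩ := hCROSS N (pidx + (I N / xs.length + 1) * xs.length) hq0j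
      refine ⟨n + 1, by omega, ?_⟩
      rw [hn2, tgt, hjmod, List.getD_eq_getElem xs c hplt, hpx]
    exact Set.Subset.antisymm hsub1 hsub2
/-- For every node `X` of the derivation forest `Γ(G)` with `|X| > 1`,
the connectivity sub-game of `G` played on `X` is forced-connected. -/
theorem stmt4 [Fintype V] (G : ConnGame V)
    (hdisj : Disjoint G.V0 G.V1)
    (hEsub : G.E ⊆ (G.V0 ×ˢ G.V1) ∪ (G.V1 ×ˢ G.V0)) :
    ∀ X ∈ forestN G, X.Nontrivial → ForcedConnected (G.restrict X) := by
  intro X hXN hnt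
  rcases forest_mem G (stab G) X hXN with ⟨w, rfl⟩ | ⟨K, hXK⟩
  · obtain ⟨a, ha, b, hb, hab⟩ := hnt
    simp only [Set.mem_singleton_iff] at ha hb
    exact absurd (ha.trans hb.symm) hab
  · have hXverts : X ⊆ G.verts := scc_subset hXK
    have hverts_eq : (G.restrict X).verts = X := by
      apply Set.Subset.antisymm
      · rintro u (hu | hu) <;> exact hu.2
      · intro u hu
        rcases hXverts hu with h0 | h1
        · exact Or.inl ⟨h0, hu⟩
        · exact Or.inr ⟨h1, hu⟩
    have hEkW : ∀ m, ∀ e ∈ Ek G m, e.1 ∈ G.verts ∧ e.2 ∈ G.verts := by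
      intro m e he
      rcases hEsub (Ek_sub_E G m he) with h | h
      · exact ⟨Or.inl h.1, Or.inr h.2⟩
      · exact ⟨Or.inr h.1, Or.inl h.2⟩
    have hrw := scc_reachWithin (hEkW K) hXK
    have hsuccGr : ∀ v ∈ (G.restrict X).verts, ∃ u, (v, u) ∈ (G.restrict X).E := by
      rw [hverts_eq]
      intro v hvX
      obtain ⟨b, hb, hbv⟩ := hnt.exists_ne v
      rcases Relation.ReflTransGen.cases_head (hrw v hvX b hb) with heq | ⟨z, hz, _⟩
      · exact absurd heq.symm hbv
      · exact ⟨z, Ek_sub_E G K hz.1, hz.2.1, hz.2.2⟩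
    refine win (G.restrict X) ?_ ?_ hsuccGr ?_ ?_
    · exact hdisj.mono Set.inter_subset_left Set.inter_subset_left
    · intro e he
      rw [hverts_eq]
      exact ⟨he.2.1, he.2.2⟩
    · rw [hverts_eq]
      intro t ht a ha
      exact claimA G hdisj hEsub X K hXK K le_rfl X hXK Set.Subset.rfl t ht a ha
    · rw [hverts_eq]; exact hnt
end Games
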